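/- Suppose d = 2. Then the state-independent disturbance of ℬ due to 𝒜 is η(𝒜,ℬ) = |⟨a_1, b_1⟩| · √(1 − |⟨a_1, b_1⟩|²) (equivalently, (1/2)sin θ where θ = arccos|𝐚·𝐛| is the angle between the Bloch vectors of the bases 𝒜 and ℬ). -/

import Mathlib

open scoped ComplexInnerProductSpace
open ComplexConjugate

noncomputable section

variable {H : Type*} [NormedAddCommGroup H] [InnerProductSpace ℂ H] [FiniteDimensional ℂ H]
variable {ι ι' : Type*} [Fintype ι] [Fintype ι']

/-- The rank-one projector `|v⟩⟨v|`. -/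
def ketbra (v : H) : H →ₗ[ℂ] H where
  toFun x := ⟪v, x⟫ • v
  map_add' x y := by simp [inner_add_right, add_smul]
  map_smul' c x := by simp [inner_smul_right, mul_smul]

/-- A density operator: self-adjoint, positive semidefinite, trace one. -/
def IsDensity (ρ : H →ₗ[ℂ] H) : Prop :=
  LinearMap.IsSymmetric ρ ∧ (∀ x : H, 0 ≤ (⟪x, ρ x⟫).re) ∧
    LinearMap.trace ℂ H ρ = 1

/-- The state-dependent error `ε_ρ(𝒜,𝒜')`. -/
def sdError (a a' : ι → H) (ρ : H →ₗ[ℂ] H) : ℝ :=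
  ⨆ i : ι, ‖LinearMap.trace ℂ H (ρ ∘ₗ (ketbra (a i) - ketbra (a' i)))‖

/-- The state-independent error `ε(𝒜,𝒜')`. -/
def siError (a a' : ι → H) : ℝ :=
  ⨆ ρ : {ρ : H →ₗ[ℂ] H // IsDensity ρ}, sdError a a' ρ.1

/-- The operator `|b_i⟩⟨b_i| − Σ_j |⟨a'_j, b_i⟩|² |a'_j⟩⟨a'_j|`. -/
def distOp (a' : ι' → H) (b : ι → H) (i : ι) : H →ₗ[ℂ] H :=
  ketbra (b i) - ∑ j : ι', (‖⟪a' j, b i⟫‖ ^ 2 : ℂ) • ketbra (a' j)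

/-- The state-dependent disturbance `η_ρ(𝒜',ℬ)`. -/
def sdDist (a' : ι' → H) (b : ι → H) (ρ : H →ₗ[ℂ] H) : ℝ :=
  ⨆ i : ι, ‖LinearMap.trace ℂ H (ρ ∘ₗ distOp a' b i)‖

/-- The state-independent disturbance `η(𝒜',ℬ)`. -/
def siDist (a' : ι' → H) (b : ι → H) : ℝ :=
  ⨆ ρ : {ρ : H →ₗ[ℂ] H // IsDensity ρ}, sdDist a' b ρ.1

/-- The state-independent overall error `Δ(𝒜,𝒜',ℬ)`. -/
def siOverall (a a' b : ι → H) : ℝ :=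
  ⨆ ρ : {ρ : H →ₗ[ℂ] H // IsDensity ρ}, (sdError a a' ρ.1 + sdDist a' b ρ.1)

/-- in dimension 2, `η(𝒜,ℬ) = |⟨a₁,b₁⟩|·√(1-|⟨a₁,b₁⟩|²)` (= ½ sin θ). -/
lemma normc_sq (z : ℂ) : (‖z‖ ^ 2 : ℂ) = conj z * z := by
  rw [Complex.conj_mul']

lemma distOp_apply₀ (a b : OrthonormalBasis (Fin 2) ℂ H) (i : Fin 2) :
    distOp ⇑a ⇑b i (a 0) = (conj ⟪a 0, b i⟫ * ⟪a 1, b i⟫) • a 1 := by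
  have o : ∀ k l : Fin 2, ⟪a k, a l⟫ = if k = l then 1 else 0 :=
    orthonormal_iff_ite.mp a.orthonormal
  have hb : (b i : H) = ⟪a 0, b i⟫ • a 0 + ⟪a 1, b i⟫ • a 1 := by
    simpa [Fin.sum_univ_two] using (a.sum_repr' (b i)).symm
  simp only [distOp, ketbra, LinearMap.sub_apply, LinearMap.coe_mk, AddHom.coe_mk,
    LinearMap.sum_apply, LinearMap.smul_apply, Fin.sum_univ_two, normc_sq]
  rw [hb]
  simp only [inner_add_left, inner_add_right, inner_smul_left, inner_smul_right, o,
    smul_add, smul_smul]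
  norm_num [o]

lemma distOp_apply₁ (a b : OrthonormalBasis (Fin 2) ℂ H) (i : Fin 2) :
    distOp ⇑a ⇑b i (a 1) = (conj ⟪a 1, b i⟫ * ⟪a 0, b i⟫) • a 0 := by
  have o : ∀ k l : Fin 2, ⟪a k, a l⟫ = if k = l then 1 else 0 :=
    orthonormal_iff_ite.mp a.orthonormal
  have hb : (b i : H) = ⟪a 0, b i⟫ • a 0 + ⟪a 1, b i⟫ • a 1 := by
    simpa [Fin.sum_univ_two] using (a.sum_repr' (b i)).symm
  simp only [distOp, ketbra, LinearMap.sub_apply, LinearMap.coe_mk, AddHom.coe_mk,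
    LinearMap.sum_apply, LinearMap.smul_apply, Fin.sum_univ_two, normc_sq]
  rw [hb]
  simp only [inner_add_left, inner_add_right, inner_smul_left, inner_smul_right, o,
    smul_add, smul_smul]
  norm_num [o]

lemma trace_eq_sum_inner' {ι : Type*} [Fintype ι] [DecidableEq ι]
    (a : OrthonormalBasis ι ℂ H) (T : H →ₗ[ℂ] H) :
    LinearMap.trace ℂ H T = ∑ i, ⟪a i, T (a i)⟫ := by
  rw [LinearMap.trace_eq_matrix_trace ℂ a.toBasis T, Matrix.trace]
  congr 1
  ext i
  rw [Matrix.diag_apply, LinearMap.toMatrix_apply, a.coe_toBasis, a.coe_toBasis_repr_apply,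
    a.repr_apply_apply]

lemma trace_comp_distOp (a b : OrthonormalBasis (Fin 2) ℂ H) (ρ : H →ₗ[ℂ] H) (i : Fin 2) :
    LinearMap.trace ℂ H (ρ ∘ₗ distOp ⇑a ⇑b i)
      = (conj ⟪a 0, b i⟫ * ⟪a 1, b i⟫) * ⟪a 0, ρ (a 1)⟫
        + (conj ⟪a 1, b i⟫ * ⟪a 0, b i⟫) * ⟪a 1, ρ (a 0)⟫ := by
  rw [trace_eq_sum_inner' a, Fin.sum_univ_two]
  simp only [LinearMap.comp_apply, distOp_apply₀, distOp_apply₁, map_smul, inner_smul_right]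

lemma offdiag_le_half (a : OrthonormalBasis (Fin 2) ℂ H) {ρ : H →ₗ[ℂ] H}
    (hρ : IsDensity ρ) : ‖⟪a 1, ρ (a 0)⟫‖ ≤ 1/2 := by
  obtain ⟨hs, hp, ht⟩ := hρ
  set z := ⟪a 1, ρ (a 0)⟫ with hzdef
  have hz : ⟪a 0, ρ (a 1)⟫ = conj z := by
    rw [hzdef, ← hs (a 1) (a 0), inner_conj_symm]
  by_cases hz0 : z = 0
  · simp [hzdef] at hz0 ⊢; rw [hz0]; norm_num
  have hznorm : (0:ℝ) < ‖z‖ := norm_pos_iff.mpr hz0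
  set φ : ℂ := -z / ‖z‖ with hφdef
  have hz' : (‖z‖:ℂ) ≠ 0 := by exact_mod_cast hznorm.ne'
  have hφconj : conj φ * z = -‖z‖ := by
    rw [hφdef, map_div₀, map_neg, Complex.conj_ofReal, neg_div, neg_mul,
      div_mul_eq_mul_div, Complex.conj_mul', sq]
    field_simp
  have hφz : φ * conj z = -‖z‖ := by
    have := congrArg conj hφconj
    simpa [mul_comm] using this
  have hφn : ‖φ‖ = 1 := by
    rw [hφdef, norm_div, norm_neg]
    simp only [Complex.norm_real, Real.norm_eq_abs, abs_norm]
    exact div_self hznorm.ne'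
  have hφ1 : conj φ * φ = 1 := by
    rw [Complex.conj_mul', hφn]
    norm_num
  have htr : ⟪a 0, ρ (a 0)⟫ + ⟪a 1, ρ (a 1)⟫ = 1 := by
    have h2 := trace_eq_sum_inner' a ρ
    rw [ht, Fin.sum_univ_two] at h2
    exact h2.symm
  have key := hp (a 0 + φ • a 1)
  have expand : ⟪a 0 + φ • a 1, ρ (a 0 + φ • a 1)⟫
      = (⟪a 0, ρ (a 0)⟫ + ⟪a 1, ρ (a 1)⟫) + (φ * conj z + conj φ * z) := by
    simp only [map_add, map_smul, inner_add_left, inner_add_right, inner_smul_left,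
      inner_smul_right, hz, ← hzdef]
    linear_combination (⟪a 1, ρ (a 1)⟫ : ℂ) * hφ1
  rw [expand, htr, hφz, hφconj] at key
  simp only [Complex.add_re, Complex.one_re, Complex.neg_re, Complex.ofReal_re] at key
  linarith

lemma parseval2 (a : OrthonormalBasis (Fin 2) ℂ H) (x : H) (hx : ‖x‖ = 1) :
    ‖⟪a 0, x⟫‖ ^ 2 + ‖⟪a 1, x⟫‖ ^ 2 = 1 := by
  have h := a.sum_inner_mul_inner x x
  rw [Fin.sum_univ_two] at h
  have hxx : (⟪x, x⟫ : ℂ) = 1 := by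
    rw [inner_self_eq_norm_sq_to_K, hx]; norm_num
  have h0 : (⟪x, a 0⟫ : ℂ) * ⟪a 0, x⟫ = (‖⟪a 0, x⟫‖ ^ 2 : ℂ) := by
    rw [← inner_conj_symm, ← normc_sq]
  have h1 : (⟪x, a 1⟫ : ℂ) * ⟪a 1, x⟫ = (‖⟪a 1, x⟫‖ ^ 2 : ℂ) := by
    rw [← inner_conj_symm, ← normc_sq]
  rw [h0, h1, hxx] at h
  exact_mod_cast h

lemma trace_bound (a b : OrthonormalBasis (Fin 2) ℂ H) {ρ : H →ₗ[ℂ] H}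
    (hρ : IsDensity ρ) (i : Fin 2) :
    ‖LinearMap.trace ℂ H (ρ ∘ₗ distOp ⇑a ⇑b i)‖ ≤ ‖⟪a 0, b i⟫‖ * ‖⟪a 1, b i⟫‖ := by
  have hz10 : ‖⟪a 1, ρ (a 0)⟫‖ ≤ 1/2 := offdiag_le_half a hρ
  have hz01 : ‖⟪a 0, ρ (a 1)⟫‖ ≤ 1/2 := by
    have : (⟪a 0, ρ (a 1)⟫ : ℂ) = conj ⟪a 1, ρ (a 0)⟫ := by
      rw [← hρ.1 (a 1) (a 0), inner_conj_symm]
    rw [this, RCLike.norm_conj]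
    exact hz10
  rw [trace_comp_distOp]
  calc ‖(conj ⟪a 0, b i⟫ * ⟪a 1, b i⟫) * ⟪a 0, ρ (a 1)⟫
        + (conj ⟪a 1, b i⟫ * ⟪a 0, b i⟫) * ⟪a 1, ρ (a 0)⟫‖
      ≤ ‖(conj ⟪a 0, b i⟫ * ⟪a 1, b i⟫) * ⟪a 0, ρ (a 1)⟫‖
        + ‖(conj ⟪a 1, b i⟫ * ⟪a 0, b i⟫) * ⟪a 1, ρ (a 0)⟫‖ := norm_add_le _ _
    _ = (‖⟪a 0, b i⟫‖ * ‖⟪a 1, b i⟫‖) * ‖⟪a 0, ρ (a 1)⟫‖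
        + (‖⟪a 1, b i⟫‖ * ‖⟪a 0, b i⟫‖) * ‖⟪a 1, ρ (a 0)⟫‖ := by
        rw [norm_mul, norm_mul, norm_mul, norm_mul, RCLike.norm_conj, RCLike.norm_conj]
    _ ≤ (‖⟪a 0, b i⟫‖ * ‖⟪a 1, b i⟫‖) * (1/2)
        + (‖⟪a 1, b i⟫‖ * ‖⟪a 0, b i⟫‖) * (1/2) := by
        gcongr <;> positivity
    _ = ‖⟪a 0, b i⟫‖ * ‖⟪a 1, b i⟫‖ := by ring

lemma prod_eq (a b : OrthonormalBasis (Fin 2) ℂ H) :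
    ‖⟪a 0, b 1⟫‖ * ‖⟪a 1, b 1⟫‖ = ‖⟪a 0, b 0⟫‖ * ‖⟪a 1, b 0⟫‖ := by
  have hb0 := parseval2 a (b 0) (b.orthonormal.1 0)
  have ha0 := parseval2 b (a 0) (a.orthonormal.1 0)
  have hb1 := parseval2 a (b 1) (b.orthonormal.1 1)
  rw [norm_inner_symm (b 0), norm_inner_symm (b 1)] at ha0
  have e1 : ‖⟪a 0, b 1⟫‖ = ‖⟪a 1, b 0⟫‖ := by
    have := abs_eq_abs.mpr (Or.inl (by linarith : ‖⟪a 0, b 1⟫‖^2 = ‖⟪a 1, b 0⟫‖^2))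
    nlinarith [norm_nonneg (⟪a 0, b 1⟫ : ℂ), norm_nonneg (⟪a 1, b 0⟫ : ℂ)]
  have e2 : ‖⟪a 1, b 1⟫‖ = ‖⟪a 0, b 0⟫‖ := by
    nlinarith [norm_nonneg (⟪a 1, b 1⟫ : ℂ), norm_nonneg (⟪a 0, b 0⟫ : ℂ)]
  rw [e1, e2]; ring

lemma isDensity_ketbra (a : OrthonormalBasis (Fin 2) ℂ H) (u : H) (hu : ‖u‖ = 1) :
    IsDensity (ketbra u) := by
  refine ⟨?_, ?_, ?_⟩
  · intro x y
    simp only [ketbra, LinearMap.coe_mk, AddHom.coe_mk, inner_smul_left, inner_smul_right]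
    rw [inner_conj_symm]
    ring
  · intro x
    simp only [ketbra, LinearMap.coe_mk, AddHom.coe_mk, inner_smul_right]
    rw [← inner_conj_symm x u, Complex.mul_conj, Complex.ofReal_re]
    exact Complex.normSq_nonneg _
  · rw [trace_eq_sum_inner' a, Fin.sum_univ_two]
    simp only [ketbra, LinearMap.coe_mk, AddHom.coe_mk, inner_smul_right]
    have h := a.sum_inner_mul_inner u u
    rw [Fin.sum_univ_two] at h
    rw [inner_self_eq_norm_sq_to_K, hu] at h
    norm_num at h
    linear_combination h

lemma exists_attain (a b : OrthonormalBasis (Fin 2) ℂ H) :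
    ∃ ρ : H →ₗ[ℂ] H, IsDensity ρ ∧
      ‖LinearMap.trace ℂ H (ρ ∘ₗ distOp ⇑a ⇑b 0)‖ = ‖⟪a 0, b 0⟫‖ * ‖⟪a 1, b 0⟫‖ := by
  have o : ∀ k l : Fin 2, ⟪a k, a l⟫ = if k = l then 1 else 0 :=
    orthonormal_iff_ite.mp a.orthonormal
  set z : ℂ := conj ⟪a 0, b 0⟫ * ⟪a 1, b 0⟫ with hzdef
  have hznorm : ‖z‖ = ‖⟪a 0, b 0⟫‖ * ‖⟪a 1, b 0⟫‖ := by
    rw [hzdef, norm_mul, RCLike.norm_conj]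
  by_cases h0 : z = 0
  · refine ⟨ketbra (a 0), isDensity_ketbra a _ (a.orthonormal.1 0), ?_⟩
    have e01 : ⟪a 0, (ketbra (a 0)) (a 1)⟫ = 0 := by
      simp [ketbra, inner_smul_right, o]
    have e10 : ⟪a 1, (ketbra (a 0)) (a 0)⟫ = 0 := by
      simp [ketbra, inner_smul_right, o]
    rw [trace_comp_distOp, e01, e10, ← hznorm, h0]
    simp
  · have h2 : (0:ℝ) < Real.sqrt 2 := by positivity
    have h2C : ((Real.sqrt 2 : ℝ) : ℂ) ≠ 0 := by exact_mod_cast h2.ne'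
    have h2sq : ((Real.sqrt 2 : ℝ) : ℂ) ^ 2 = 2 := by
      norm_cast
      rw [Real.sq_sqrt]; norm_num
    have hzn : (0:ℝ) < ‖z‖ := norm_pos_iff.mpr h0
    have hznC : (‖z‖ : ℂ) ≠ 0 := by exact_mod_cast hzn.ne'
    set p : ℂ := conj z / ((‖z‖ : ℂ) * ((Real.sqrt 2 : ℝ) : ℂ)) with hpdef
    set q : ℂ := (((Real.sqrt 2 : ℝ) : ℂ))⁻¹ with hqdef
    set u : H := p • a 0 + q • a 1 with hudef
    have habs : ((‖z‖ : ℝ) : ℂ) ≠ 0 := hznC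
    have hpn : ‖p‖ = (Real.sqrt 2)⁻¹ := by
      have hd : ‖((‖z‖ : ℂ) * ((Real.sqrt 2 : ℝ) : ℂ))‖ = ‖z‖ * Real.sqrt 2 := by
        rw [norm_mul, Complex.norm_real, Complex.norm_real, Real.norm_eq_abs,
          Real.norm_eq_abs, abs_norm, abs_of_pos h2]
      rw [hpdef, norm_div, RCLike.norm_conj, hd]
      field_simp
    have hqn : ‖q‖ = (Real.sqrt 2)⁻¹ := by
      rw [hqdef, norm_inv, Complex.norm_real, Real.norm_eq_abs, abs_of_pos h2]
    have hun : ‖u‖ = 1 := by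
      have key : ‖u‖ ^ 2 = 1 := by
        rw [hudef, @norm_add_sq ℂ, inner_smul_left, inner_smul_right, o]
        norm_num [norm_smul, a.orthonormal.1 0, a.orthonormal.1 1, hpn, hqn,
          Real.sq_sqrt (by norm_num : (0:ℝ) ≤ 2)]
      nlinarith [norm_nonneg u]
    refine ⟨ketbra u, isDensity_ketbra a u hun, ?_⟩
    have i0u : ⟪a 0, u⟫ = p := by simp [hudef, inner_add_right, inner_smul_right, o]
    have i1u : ⟪a 1, u⟫ = q := by simp [hudef, inner_add_right, inner_smul_right, o]
    have iu0 : ⟪u, a 0⟫ = conj p := by rw [← inner_conj_symm, i0u]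
    have iu1 : ⟪u, a 1⟫ = conj q := by rw [← inner_conj_symm, i1u]
    have e01 : ⟪a 0, (ketbra u) (a 1)⟫ = conj q * p := by
      simp only [ketbra, LinearMap.coe_mk, AddHom.coe_mk, inner_smul_right, iu1, i0u]
    have e10 : ⟪a 1, (ketbra u) (a 0)⟫ = conj p * q := by
      simp only [ketbra, LinearMap.coe_mk, AddHom.coe_mk, inner_smul_right, iu0, i1u]
    rw [trace_comp_distOp, e01, e10, ← hzdef]
    have hzz : z * conj z = ((‖z‖ : ℂ)) ^ 2 := by
      rw [mul_comm, ← normc_sq]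
    have hqc : conj q = q := by rw [hqdef, map_inv₀, Complex.conj_ofReal]
    have hpc : conj p = z / ((‖z‖ : ℂ) * ((Real.sqrt 2 : ℝ) : ℂ)) := by
      simp only [hpdef, map_div₀, map_mul, Complex.conj_conj, Complex.conj_ofReal]
    have main : z * (conj q * p) + conj z * (conj p * q) = (‖z‖ : ℂ) := by
      rw [hqc, hpc, hpdef, hqdef]
      have expand : z * ((((Real.sqrt 2 : ℝ) : ℂ))⁻¹ * (conj z / ((‖z‖ : ℂ) * ((Real.sqrt 2 : ℝ) : ℂ))))
          + conj z * (z / ((‖z‖ : ℂ) * ((Real.sqrt 2 : ℝ) : ℂ)) * (((Real.sqrt 2 : ℝ) : ℂ))⁻¹)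
          = (z * conj z + conj z * z) * (((‖z‖ : ℂ))⁻¹ * ((((Real.sqrt 2 : ℝ) : ℂ))⁻¹ * (((Real.sqrt 2 : ℝ) : ℂ))⁻¹)) := by
        field_simp
      rw [expand, hzz, mul_comm (conj z) z, hzz]
      have hinv2 : ((((Real.sqrt 2 : ℝ) : ℂ))⁻¹ * (((Real.sqrt 2 : ℝ) : ℂ))⁻¹) = 2⁻¹ := by
        rw [← mul_inv, ← sq, h2sq]
      rw [hinv2, sq]
      field_simp
      ring
    have hgoal : (conj ⟪a 0, b 0⟫ * ⟪a 1, b 0⟫) * (conj q * p)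
        + (conj ⟪a 1, b 0⟫ * ⟪a 0, b 0⟫) * (conj p * q) = (‖z‖ : ℂ) := by
      rw [← main, ← hzdef]
      have hc : (conj ⟪a 1, b 0⟫ * ⟪a 0, b 0⟫ : ℂ) = conj z := by
        rw [hzdef, map_mul, Complex.conj_conj]; ring
      rw [hc]
    rw [hgoal, Complex.norm_real, Real.norm_eq_abs, abs_norm, hznorm]

theorem disturbance_qubit_closed_form (a b : OrthonormalBasis (Fin 2) ℂ H) :
    siDist (⇑a) (⇑b) = ‖⟪a 0, b 0⟫‖ * Real.sqrt (1 - ‖⟪a 0, b 0⟫‖ ^ 2) := by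
  have hs2 : ‖⟪a 1, b 0⟫‖ ^ 2 = 1 - ‖⟪a 0, b 0⟫‖ ^ 2 := by
    have := parseval2 a (b 0) (b.orthonormal.1 0)
    linarith
  have hsqrt : Real.sqrt (1 - ‖⟪a 0, b 0⟫‖ ^ 2) = ‖⟪a 1, b 0⟫‖ := by
    rw [← hs2, Real.sqrt_sq (norm_nonneg _)]
  rw [hsqrt]
  haveI hne : Nonempty {ρ : H →ₗ[ℂ] H // IsDensity ρ} :=
    ⟨⟨ketbra (a 0), isDensity_ketbra a _ (a.orthonormal.1 0)⟩⟩
  have hub : ∀ ρ : H →ₗ[ℂ] H, IsDensity ρ →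
      sdDist (⇑a) (⇑b) ρ ≤ ‖⟪a 0, b 0⟫‖ * ‖⟪a 1, b 0⟫‖ := by
    intro ρ hρ
    apply ciSup_le
    intro i
    fin_cases i
    · exact trace_bound a b hρ 0
    · calc ‖LinearMap.trace ℂ H (ρ ∘ₗ distOp (⇑a) (⇑b) 1)‖
          ≤ ‖⟪a 0, b 1⟫‖ * ‖⟪a 1, b 1⟫‖ := trace_bound a b hρ 1
        _ = ‖⟪a 0, b 0⟫‖ * ‖⟪a 1, b 0⟫‖ := prod_eq a b
  obtain ⟨ρ₀, hρ₀, hval⟩ := exists_attain a b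
  apply le_antisymm
  · exact ciSup_le (fun ρ => hub ρ.1 ρ.2)
  · have h1 : ‖⟪a 0, b 0⟫‖ * ‖⟪a 1, b 0⟫‖ ≤ sdDist (⇑a) (⇑b) ρ₀ := by
      rw [← hval]
      exact le_ciSup (f := fun i : Fin 2 =>
        ‖LinearMap.trace ℂ H (ρ₀ ∘ₗ distOp (⇑a) (⇑b) i)‖) (Set.finite_range _).bddAbove 0
    have hbdd : BddAbove (Set.range fun ρ : {ρ : H →ₗ[ℂ] H // IsDensity ρ} =>
        sdDist (⇑a) (⇑b) ρ.1) := by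
      refine ⟨‖⟪a 0, b 0⟫‖ * ‖⟪a 1, b 0⟫‖, ?_⟩
      rintro y ⟨ρ, rfl⟩
      exact hub ρ.1 ρ.2
    exact h1.trans (le_ciSup (f := fun ρ : {ρ : H →ₗ[ℂ] H // IsDensity ρ} =>
      sdDist (⇑a) (⇑b) ρ.1) hbdd ⟨ρ₀, hρ₀⟩)
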